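/- The negative binomial output distributions of a quantum-limited amplifier satisfy a Fock-majorization ladder: for every k ≥ 0 and every n ≥ 0, Σ_{i=0}^n C(i+k,i) t^i (1-t)^{k+1} ≥ Σ_{i=0}^n C(i+k+1,i) t^i (1-t)^{k+2}, for all t ∈ [0,1). -/

import Mathlib

open scoped BigOperators

lemma amp_choose_key (k i : ℕ) :
    ((i + k + 1).choose i : ℝ) = (i + k).choose i + (i + k).choose (k + 1) := by
  have h1 : (i + k + 1).choose i = (i + k + 1).choose (k + 1) := by
    have := Nat.choose_symm (n := i + k + 1) (k := k + 1) (by omega)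
    simpa [show i + k + 1 - (k + 1) = i by omega] using this
  have h2 : (i + k + 1).choose (k + 1) = (i + k).choose k + (i + k).choose (k + 1) :=
    Nat.choose_succ_succ (i + k) k
  have h3 : (i + k).choose k = (i + k).choose i := by
    have := Nat.choose_symm (n := i + k) (k := k) (by omega)
    simpa [show i + k - k = i by omega] using this.symm
  rw [h1, h2, h3]
  push_cast
  ring

theorem amplifier_fock_majorization_ladder
    (t : ℝ) (ht0 : 0 ≤ t) (ht1 : t < 1) (k n : ℕ) :
    ∑ i ∈ Finset.range (n + 1),
        ((i + k + 1).choose i : ℝ) * t ^ i * (1 - t) ^ (k + 2)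
      ≤ ∑ i ∈ Finset.range (n + 1),
        ((i + k).choose i : ℝ) * t ^ i * (1 - t) ^ (k + 1) := by
  have hpos : (0 : ℝ) ≤ 1 - t := by linarith
  set f : ℕ → ℝ := fun i => ((i + k).choose (k + 1) : ℝ) * t ^ i * (1 - t) ^ (k + 1)
    with hf
  have tele : ∑ i ∈ Finset.range (n + 1),
      (((i + k).choose i : ℝ) * t ^ i * (1 - t) ^ (k + 1)
        - ((i + k + 1).choose i : ℝ) * t ^ i * (1 - t) ^ (k + 2))
      = f (n + 1) - f 0 := by
    rw [← Finset.sum_range_sub f]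
    apply Finset.sum_congr rfl
    intro i _
    have h1 := amp_choose_key k i
    have h2 : ((i + 1 + k).choose (k + 1) : ℝ)
        = (i + k).choose i + (i + k).choose (k + 1) := by
      have : i + 1 + k = i + k + 1 := by omega
      rw [this, ← amp_choose_key k i]
      have : (i + k + 1).choose i = (i + k + 1).choose (k + 1) := by
        have := Nat.choose_symm (n := i + k + 1) (k := k + 1) (by omega)
        simpa [show i + k + 1 - (k + 1) = i by omega] using this
      rw [this]
    simp only [hf]
    rw [h1, h2]
    ring
  have hf0 : f 0 = 0 := by
    simp [hf, Nat.choose_eq_zero_of_lt (by omega : k < k + 1)]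
  have hfn : 0 ≤ f (n + 1) := by
    apply mul_nonneg
    apply mul_nonneg
    · positivity
    · positivity
    · positivity
  have := tele
  rw [hf0, sub_zero, Finset.sum_sub_distrib] at this
  linarith
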